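/- Let S be a multiplicatively closed subset of R and M an R-module. If N is a 2-absorbing primary submodule of M and S⁻¹N ≠ S⁻¹M, then S⁻¹N is a 2-absorbing primary submodule of the S⁻¹R-module S⁻¹M. -/

import Mathlib

open Submodule

variable {R : Type*} [CommRing R] {M : Type*} [AddCommGroup M] [Module R M]

/-- A prime submodule: proper, and `a • m ∈ P` implies `m ∈ P` or `a • ⊤ ≤ P`. -/
def IsPrimeSubmodule (P : Submodule R M) : Prop :=
  P ≠ ⊤ ∧ ∀ (a : R) (m : M), a • m ∈ P → m ∈ P ∨ a ∈ P.colon ⊤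

/-- The `M`-radical of `N`: intersection of prime submodules containing `N`
(equal to `⊤` when there are none). -/
def mRad (N : Submodule R M) : Submodule R M :=
  sInf {P : Submodule R M | IsPrimeSubmodule P ∧ N ≤ P}

/-- 2-absorbing primary submodule. -/
def Is2AbsorbingPrimary (N : Submodule R M) : Prop :=
  N ≠ ⊤ ∧ ∀ (a b : R) (m : M), (a * b) • m ∈ N →
    a • m ∈ mRad N ∨ b • m ∈ mRad N ∨ a * b ∈ N.colon ⊤

/-- Multiplication module: every submodule is `I • ⊤` for some ideal `I`. -/
def IsMultiplicationModule (R M : Type*) [CommRing R] [AddCommGroup M] [Module R M] : Prop :=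
  ∀ N : Submodule R M, ∃ I : Ideal R, N = I • (⊤ : Submodule R M)

/-- Primary submodule. -/
def IsPrimarySubmodule (P : Submodule R M) : Prop :=
  P ≠ ⊤ ∧ ∀ (a : R) (m : M), a • m ∈ P → m ∈ P ∨ a ∈ (P.colon ⊤).radical

/-- 2-absorbing primary ideal. -/
def Is2AbsorbingPrimaryIdeal {R : Type*} [CommRing R] (I : Ideal R) : Prop :=
  I ≠ ⊤ ∧ ∀ a b c : R, a * b * c ∈ I → a * b ∈ I ∨ a * c ∈ I.radical ∨ b * c ∈ I.radical

/-- 2-absorbing submodule. -/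
def Is2AbsorbingSubmodule (K : Submodule R M) : Prop :=
  K ≠ ⊤ ∧ ∀ (a b : R) (m : M), (a * b) • m ∈ K →
    a * b ∈ K.colon ⊤ ∨ a • m ∈ K ∨ b • m ∈ K

section aux
variable (S : Submonoid R)

local notation "f" => LocalizedModule.mkLinearMap S M

/-- `mk' f m u = (1/u) • f m`. -/
lemma aux_mk'_eq (m : M) (u : S) :
    IsLocalizedModule.mk' (f) m u
      = IsLocalization.mk' (Localization S) (1 : R) u • (f) m := by
  rw [← IsLocalizedModule.mk'_one S (f) m, IsLocalizedModule.mk'_smul_mk', one_smul, mul_one]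

lemma aux_mrad {N : Submodule R M} {n : M} (hn : n ∈ mRad N) (v : S) :
    IsLocalizedModule.mk' (f) n v ∈ mRad (N.localized S) := by
  apply Submodule.mem_sInf.2
  rintro P ⟨hP, hNP⟩
  set Q : Submodule R M := (P.restrictScalars R).comap (f) with hQ
  have hQtop : Q ≠ ⊤ := by
    intro h
    apply hP.1
    rw [eq_top_iff]
    rintro x -
    obtain ⟨⟨m, u⟩, rfl⟩ := IsLocalizedModule.mk'_surjective S (f) x
    simp only [Function.uncurry_apply_pair]
    rw [aux_mk'_eq]
    exact P.smul_mem _ (by simpa [hQ] using (Submodule.eq_top_iff'.1 h m))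
  have hQprime : IsPrimeSubmodule Q := by
    refine ⟨hQtop, fun a m ham => ?_⟩
    have ham' : algebraMap R (Localization S) a • (f) m ∈ P := by
      rw [algebraMap_smul]
      simpa [hQ, map_smul] using ham
    rcases hP.2 _ _ ham' with h | h
    · exact Or.inl h
    · refine Or.inr (Submodule.mem_colon.2 fun m' _ => ?_)
      show (f) (a • m') ∈ P
      rw [map_smul, ← algebraMap_smul (Localization S)]
      exact Submodule.mem_colon.1 h ((f) m') trivial
  have hNQ : N ≤ Q := fun x hx =>
    show (f) x ∈ P from hNP ⟨x, hx, 1, IsLocalizedModule.mk'_one _ _ _⟩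
  have hfn : (f) n ∈ P := Submodule.mem_sInf.1 hn Q ⟨hQprime, hNQ⟩
  rw [aux_mk'_eq]
  exact P.smul_mem _ hfn

lemma aux_colon {N : Submodule R M} {r : R} (hr : r ∈ N.colon ⊤) (s : S) :
    IsLocalization.mk' (Localization S) r s ∈ (N.localized S).colon ⊤ := by
  refine Submodule.mem_colon.2 fun x _ => ?_
  obtain ⟨⟨m, u⟩, rfl⟩ := IsLocalizedModule.mk'_surjective S (f) x
  simp only [Function.uncurry_apply_pair]
  rw [IsLocalizedModule.mk'_smul_mk']
  exact ⟨r • m, Submodule.mem_colon.1 hr m trivial, s * u, rfl⟩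

end aux

theorem stmt10 (S : Submonoid R) (N : Submodule R M)
    (hN : Is2AbsorbingPrimary N) (hne : N.localized S ≠ ⊤) :
    Is2AbsorbingPrimary (N.localized S) := by
  refine ⟨hne, fun A B x hABx => ?_⟩
  set f := LocalizedModule.mkLinearMap S M with hf
  obtain ⟨⟨a, s⟩, rfl⟩ := IsLocalization.mk'_surjective S A
  obtain ⟨⟨b, t⟩, rfl⟩ := IsLocalization.mk'_surjective S B
  obtain ⟨⟨m, u⟩, rfl⟩ := IsLocalizedModule.mk'_surjective S f x
  simp only [Function.uncurry_apply_pair] at hABx ⊢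
  rw [← IsLocalization.mk'_mul, IsLocalizedModule.mk'_smul_mk'] at hABx
  obtain ⟨n, hn, v, hv⟩ := hABx
  rw [IsLocalizedModule.mk'_eq_mk'_iff] at hv
  obtain ⟨c, hc⟩ := hv
  -- hc : c • v • ((a*b) • m) = c • (s*t*u) • n
  have key : (a * b) • (((c : R) * (v : R)) • m) ∈ N := by
    have h1 : ((c : R) * (v : R)) • ((a * b) • m) ∈ N := by
      have := hc
      rw [Submonoid.smul_def, Submonoid.smul_def, Submonoid.smul_def, Submonoid.smul_def,
        ← mul_smul, ← mul_smul] at this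
      rw [← mul_smul, this]
      exact N.smul_mem _ (N.smul_mem _ hn)
    rwa [smul_comm] at h1
  rcases hN.2 a b (((c : R) * (v : R)) • m) key with h | h | h
  · left
    rw [IsLocalizedModule.mk'_smul_mk']
    have : IsLocalizedModule.mk' f (a • m) (s * u)
        = IsLocalizedModule.mk' f ((c * v : S) • (a • m)) ((s * u) * (c * v)) :=
      (IsLocalizedModule.mk'_cancel_right f _ _ _).symm
    rw [this]
    have hmem : (c * v : S) • (a • m) ∈ mRad N := by
      rw [Submonoid.smul_def, Submonoid.coe_mul, smul_comm]
      exact h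
    exact aux_mrad S hmem _
  · right; left
    rw [IsLocalizedModule.mk'_smul_mk']
    have : IsLocalizedModule.mk' f (b • m) (t * u)
        = IsLocalizedModule.mk' f ((c * v : S) • (b • m)) ((t * u) * (c * v)) :=
      (IsLocalizedModule.mk'_cancel_right f _ _ _).symm
    rw [this]
    have hmem : (c * v : S) • (b • m) ∈ mRad N := by
      rw [Submonoid.smul_def, Submonoid.coe_mul, smul_comm]
      exact h
    exact aux_mrad S hmem _
  · right; right
    rw [← IsLocalization.mk'_mul]
    exact aux_colon S h _
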